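/- Let X be a directed graph and I the directed graph with vertices {−1, 0, +1} and edges −1→0 and +1→0. Let CX be obtained from X □ I by collapsing the induced subgraph X □ {+1} to a single vertex. Then the inclusion X ≅ X □ {−1} ↪ CX is a cofibration of directed graphs. -/

import Mathlib

open scoped Classical

/-- A directed graph on a vertex type `V` (loops allowed, no parallel edges). -/
structure DGraph (V : Type) where
  Adj : V → V → Prop

namespace DGraph
variable {V W : Type}

/-- There is a directed path of length `n` (i.e. with `n` edges) from `x` to `y`. -/
def PathLen (G : DGraph V) (x y : V) (n : ℕ) : Prop :=
  ∃ f : ℕ → V, f 0 = x ∧ f n = y ∧ ∀ i < n, G.Adj (f i) (f (i + 1))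

/-- The shortest path metric, with values in `ℕ∞ = ℕ ∪ {∞}`. -/
noncomputable def edist (G : DGraph V) (x y : V) : ℕ∞ :=
  sInf {n : ℕ∞ | ∃ m : ℕ, n = m ∧ G.PathLen x y m}

/-- The length of a tuple of vertices: the sum of consecutive distances. -/
noncomputable def tlen (G : DGraph V) {k : ℕ} (f : Fin (k + 1) → V) : ℕ∞ :=
  ∑ i : Fin k, G.edist (f i.castSucc) (f i.succ)

/-- The box product of directed graphs. -/
def box (G : DGraph V) (H : DGraph W) : DGraph (V × W) where
  Adj p q := (p.1 = q.1 ∧ H.Adj p.2 q.2) ∨ (p.2 = q.2 ∧ G.Adj p.1 q.1)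

/-- The strong product of directed graphs. -/
def strong (G : DGraph V) (H : DGraph W) : DGraph (V × W) where
  Adj p q := (p.1 = q.1 ∧ H.Adj p.2 q.2) ∨ (p.2 = q.2 ∧ G.Adj p.1 q.1) ∨
    (G.Adj p.1 q.1 ∧ H.Adj p.2 q.2)

end DGraph

namespace DGraph
variable {V : Type}
/-- `y` is reachable from `x` by a directed path. -/
def Reaches (G : DGraph V) (x y : V) : Prop := Relation.ReflTransGen G.Adj x y
end DGraph

/-- `A ⊆ V`, with projection `π`, is a cofibration in `G`: an induced subgraph inclusion
with no edges from outside `A` into `A`, such that every vertex `x` in the reach of `A`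
has a projection `π x ∈ A` with `d(a,x) = d(a,π x) + d(π x,x)` for all `a ∈ A`. -/
def IsCofib {V : Type} (G : DGraph V) (A : Set V) (π : V → V) : Prop :=
  (∀ u v : V, u ∉ A → v ∈ A → ¬ G.Adj u v) ∧
  (∀ x : V, (∃ a ∈ A, G.Reaches a x) →
    π x ∈ A ∧ ∀ a ∈ A, G.edist a x = G.edist a (π x) + G.edist (π x) x)

namespace DGraph
variable {V : Type}

/-- The cone `CX` on a directed graph `X`: the quotient of the box product `X □ I`
(where `I` is `−1 → 0 ← +1`) collapsing `X □ {+1}` to a single vertex.  Vertices: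
`some (x, false)` is `(x, −1)`, `some (x, true)` is `(x, 0)`, and `none` is the cone
point `+1`. -/
def Cone (G : DGraph V) : DGraph (Option (V × Bool)) where
  Adj u v :=
    match u, v with
    | some (x, b₁), some (y, b₂) =>
        (b₁ = b₂ ∧ G.Adj x y) ∨ (b₁ = false ∧ b₂ = true ∧ x = y)
    | none, some (_, b₂) => b₂ = true
    | none, none => ∃ x y : V, G.Adj x y
    | some _, none => False

end DGraph

namespace DGraph
variable {V : Type}

lemma pathLen_refl (G : DGraph V) (x : V) : G.PathLen x x 0 :=
  ⟨fun _ => x, rfl, rfl, by omega⟩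

lemma pathLen_snoc {G : DGraph V} {x y z : V} {n : ℕ} (h : G.PathLen x y n)
    (e : G.Adj y z) : G.PathLen x z (n + 1) := by
  obtain ⟨f, h0, hn, hadj⟩ := h
  refine ⟨fun i => if i = n + 1 then z else f i, by simp [h0], by simp, ?_⟩
  intro i hi
  rcases Nat.lt_or_ge i n with h' | h'
  · have h1 : i ≠ n + 1 := by omega
    have h2 : i + 1 ≠ n + 1 := by omega
    simpa [h1, h2, show i ≠ n by omega] using hadj i h'
  · have h3 : i = n := by omega
    subst h3
    have h1 : i ≠ i + 1 := by omega
    simpa [h1, hn] using e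

lemma edist_le {G : DGraph V} {x y : V} {n : ℕ} (h : G.PathLen x y n) :
    G.edist x y ≤ n := sInf_le ⟨n, rfl, h⟩

lemma edist_self (G : DGraph V) (x : V) : G.edist x x = 0 :=
  le_antisymm (by simpa using edist_le (pathLen_refl G x)) (zero_le)

lemma cone_edge (G : DGraph V) (x : V) :
    G.Cone.Adj (some (x, false)) (some (x, true)) := Or.inr ⟨rfl, rfl, rfl⟩

lemma cone_edge_false {G : DGraph V} {x y : V} (h : G.Adj x y) :
    G.Cone.Adj (some (x, false)) (some (y, false)) := Or.inl ⟨rfl, h⟩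

/-- the vertical edge has distance exactly 1 -/
lemma cone_edist_step (G : DGraph V) (x : V) :
    G.Cone.edist (some (x, false)) (some (x, true)) = 1 := by
  refine le_antisymm ?_ ?_
  · simpa using edist_le (pathLen_snoc (pathLen_refl _ _) (cone_edge G x))
  · refine le_sInf ?_
    rintro n ⟨m, rfl, f, h0, hm, -⟩
    match m with
    | 0 => rw [h0] at hm; simp at hm
    | m + 1 => exact_mod_cast Nat.one_le_iff_ne_zero.2 (Nat.succ_ne_zero m)

/-- a path to the 0-level yields a shorter path to the −1-level -/
lemma cone_path_down (G : DGraph V) :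
    ∀ m z y, G.Cone.PathLen (some (z, false)) (some (y, true)) m →
      ∃ k, k + 1 ≤ m ∧ G.Cone.PathLen (some (z, false)) (some (y, false)) k := by
  intro m
  induction m with
  | zero =>
    rintro z y ⟨f, h0, hm, -⟩
    rw [h0] at hm; simp at hm
  | succ m ih =>
    rintro z y ⟨f, h0, hm, hadj⟩
    have hpath : G.Cone.PathLen (some (z, false)) (f m) m :=
      ⟨f, h0, rfl, fun i hi => hadj i (by omega)⟩
    have hsome : ∀ i, i ≤ m + 1 → ∃ q, f i = some q := by
      intro i
      induction i with
      | zero => intro _; exact ⟨(z, false), h0⟩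
      | succ i ih2 =>
        intro hi
        obtain ⟨q, hq⟩ := ih2 (by omega)
        have := hadj i (by omega)
        rw [hq] at this
        match h : f (i + 1) with
        | some p => exact ⟨p, rfl⟩
        | none => rw [h] at this; exact absurd this (by simp [Cone])
    obtain ⟨⟨x, b⟩, hx⟩ := hsome m (by omega)
    have hlast := hadj m (by omega)
    rw [hx, hm] at hlast
    rw [hx] at hpath
    match b with
    | false =>
      rcases hlast with ⟨h1, -⟩ | ⟨-, -, h3⟩
      · exact absurd h1 (by simp)
      · subst h3
        exact ⟨m, le_refl _, hpath⟩
    | true =>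
      rcases hlast with ⟨-, h2⟩ | ⟨h1, -⟩
      · obtain ⟨k, hk, hp⟩ := ih z x hpath
        exact ⟨k + 1, by omega, pathLen_snoc hp (cone_edge_false h2)⟩
      · exact absurd h1 (by simp)

lemma cone_edist_true (G : DGraph V) (z y : V) :
    G.Cone.edist (some (z, false)) (some (y, true)) =
      G.Cone.edist (some (z, false)) (some (y, false)) + 1 := by
  refine le_antisymm ?_ ?_
  · by_cases h : ({n : ℕ∞ | ∃ m : ℕ, n = m ∧
        G.Cone.PathLen (some (z, false)) (some (y, false)) m} : Set ℕ∞).Nonempty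
    · obtain ⟨m, hm, hp⟩ := csInf_mem h
      rw [show G.Cone.edist (some (z, false)) (some (y, false)) = (m : ℕ∞) from hm]
      have : G.Cone.PathLen (some (z, false)) (some (y, true)) (m + 1) :=
        pathLen_snoc hp (cone_edge G y)
      calc G.Cone.edist (some (z, false)) (some (y, true)) ≤ (↑(m + 1) : ℕ∞) :=
            edist_le this
        _ = ↑m + 1 := by push_cast; ring
    · rw [Set.not_nonempty_iff_eq_empty] at h
      have ht : G.Cone.edist (some (z, false)) (some (y, false)) = ⊤ := by
        rw [edist, h, sInf_empty]
      rw [ht, top_add]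
      exact le_top
  · refine le_sInf ?_
    rintro n ⟨m, rfl, hp⟩
    obtain ⟨k, hk, hpk⟩ := cone_path_down G m z y hp
    calc G.Cone.edist (some (z, false)) (some (y, false)) + 1 ≤ ↑k + 1 :=
          add_le_add_left (edist_le hpk) 1
      _ = (↑(k + 1) : ℕ∞) := by push_cast; ring
      _ ≤ ↑m := by exact_mod_cast hk

lemma cone_adj_some {G : DGraph V} {q : V × Bool} {w : Option (V × Bool)}
    (h : G.Cone.Adj (some q) w) : ∃ r, w = some r := by
  match w with
  | some r => exact ⟨r, rfl⟩
  | none => exact absurd h (by simp [Cone])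

lemma cone_reaches_some (G : DGraph V) (p : V × Bool) (w : Option (V × Bool))
    (h : G.Cone.Reaches (some p) w) : ∃ q, w = some q := by
  induction h with
  | refl => exact ⟨p, rfl⟩
  | tail h1 h2 ih =>
    obtain ⟨q, rfl⟩ := ih
    exact cone_adj_some h2

end DGraph

/-- the inclusion `X ≅ X □ {−1} ↪ CX` is a cofibration of directed
graphs. -/
theorem cone_inclusion_cofibration {V : Type} (G : DGraph V) :
    -- the inclusion `x ↦ (x, −1)` identifies `X` with an induced subgraph of `CX`:
    (∀ x y : V, G.Adj x y ↔
      (G.Cone).Adj (some (x, false)) (some (y, false))) ∧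
    -- and it is a cofibration:
    ∃ π : Option (V × Bool) → Option (V × Bool),
      IsCofib (G.Cone) {w : Option (V × Bool) | ∃ x : V, w = some (x, false)} π := by
  constructor
  · intro x y
    constructor
    · exact fun h => Or.inl ⟨rfl, h⟩
    · rintro (⟨-, h⟩ | ⟨-, h, -⟩)
      · exact h
      · exact absurd h (by simp)
  · refine ⟨fun w => match w with | some (x, _) => some (x, false) | none => none, ?_, ?_⟩
    · intro u v hu hv hadj
      obtain ⟨y, rfl⟩ := hv
      match u with
      | none => simp [DGraph.Cone] at hadj
      | some (x, true) => rcases hadj with ⟨h, -⟩ | ⟨h, -⟩ <;> simp at h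
      | some (x, false) => exact hu ⟨x, rfl⟩
    · intro w hw
      obtain ⟨a, ha, hr⟩ := hw
      obtain ⟨z, rfl⟩ := ha
      obtain ⟨⟨y, b⟩, rfl⟩ := DGraph.cone_reaches_some G _ _ hr
      refine ⟨⟨y, rfl⟩, ?_⟩
      rintro a ⟨v, rfl⟩
      match b with
      | false =>
        show _ = _ + G.Cone.edist (some (y, false)) (some (y, false))
        rw [DGraph.edist_self, add_zero]
      | true =>
        show G.Cone.edist (some (v, false)) (some (y, true)) =
          G.Cone.edist (some (v, false)) (some (y, false)) +
            G.Cone.edist (some (y, false)) (some (y, true))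
        rw [DGraph.cone_edist_step, DGraph.cone_edist_true]
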